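/- Let n ∈ ℕ, let S and T be trees, and let P be a branch of S such that bh(P) ≤ th(T), lh(P) ≥ dim(T), and either (n > th(T) and n ≤ lh(P)) or n ≥ lh(P). Then the n-boundary commutes with insertion: ∂_n(S)≪∂_n(P), ∂_n(T)≫ = ∂_n(S≪P,T≫), and for each ε ∈ {−,+} the boundary inclusions satisfy δ_n^ε(S) ∘ κ_{S,P,T} ≡^max κ_{∂_n S, ∂_n P, ∂_n T} ∘ δ_n^ε(S≪P,T≫). -/

import Mathlib

section NaturalOps

universe u

/-- Natural (Hessenberg) addition of ordinals, as in the older Mathlib's `Ordinal.nadd`. -/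
noncomputable def Ordinal.nadd (a b : Ordinal.{u}) : Ordinal.{u} :=
  max (Ordinal.blsub.{u, u} a fun a' h => Ordinal.nadd a' b)
    (Ordinal.blsub.{u, u} b fun b' h => Ordinal.nadd a b')
termination_by (a, b)
decreasing_by
  · exact Prod.Lex.left _ _ h
  · exact Prod.Lex.right _ h

notation:65 a:65 " ♯ " b:66 => Ordinal.nadd a b

end NaturalOps

namespace Catt

/-! ### Finite planar rooted trees -/

abbrev Path := List ℕ

inductive Tree : Type
  | node : List Tree → Tree

/-- The list of child subtrees. -/
def Tree.children : Tree → List Tree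
  | .node ts => ts

/-- Trunk height. -/
def Tree.th : Tree → ℕ
  | .node [t] => t.th + 1
  | _ => 0

/-- Dimension of a tree. -/
def Tree.dim : Tree → ℕ
  | .node [] => 0
  | .node (t :: ts) => max (t.dim + 1) (Tree.dim (.node ts))

/-- A tree is linear when its trunk height equals its dimension. -/
def Tree.linear (T : Tree) : Prop := T.th = T.dim

/-- The linear tree of dimension `n` (the `n`-disc). -/
def discTree : ℕ → Tree
  | 0 => .node []
  | n + 1 => .node [discTree n]

/-- Suspension of a tree. -/
def Tree.susp (T : Tree) : Tree := .node [T]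

/-- Subtree of `T` indexed by a list of naturals. -/
def Tree.subtree : List ℕ → Tree → Tree
  | [], T => T
  | k :: P, T => Tree.subtree P (T.children.getD k (.node []))

/-- Validity of a variable path in (the pasting context generated by) a tree:
a path `k₁ :: ⋯ :: kᵣ :: [j]` descends through children `kᵢ` and ends in the
`j`-th 0-dimensional endpoint of the resulting node. -/
inductive IsPath : Tree → Path → Prop
  | point (ts : List Tree) (j : ℕ) : j ≤ ts.length → IsPath (.node ts) [j]
  | deeper (ts : List Tree) (k : ℕ) (p : Path) : k < ts.length →
      IsPath (ts.getD k (.node [])) p → IsPath (.node ts) (k :: p)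

/-- Paths of locally maximal variables. -/
inductive IsMaxPath : Tree → Path → Prop
  | here : IsMaxPath (.node []) [0]
  | there (ts : List Tree) (k : ℕ) (p : Path) : k < ts.length →
      IsMaxPath (ts.getD k (.node [])) p → IsMaxPath (.node ts) (k :: p)

/-- A branch of a tree: a non-empty index list whose subtree is linear. -/
inductive IsBranch : Tree → List ℕ → Prop
  | here (ts : List Tree) (k : ℕ) : k < ts.length → (ts.getD k (.node [])).linear →
      IsBranch (.node ts) [k]
  | there (ts : List Tree) (k : ℕ) (P : List ℕ) : k < ts.length → P ≠ [] →
      IsBranch (ts.getD k (.node [])) P → IsBranch (.node ts) (k :: P)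

/-- The path of the unique locally maximal variable of a linear tree. -/
def Tree.maxPath : Tree → Path
  | .node [] => [0]
  | .node (t :: _) => 0 :: t.maxPath

/-- The locally maximal variable `⌊P⌋` corresponding to a branch `P` of `S`. -/
def branchVar : List ℕ → Tree → Path
  | [], S => S.maxPath
  | [k], S => k :: (S.children.getD k (.node [])).maxPath
  | k :: P, S => k :: branchVar P (S.children.getD k (.node []))

/-- Branch height `bh(P)`. -/
def bh (P : List ℕ) : ℕ := P.length - 1

/-- Leaf height `lh(P)`, the dimension of `⌊P⌋`. -/
def lh (P : List ℕ) (S : Tree) : ℕ := (branchVar P S).length - 1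

/-- The inserted tree `S ≪ P , T ≫`. -/
def insTree : List ℕ → Tree → Tree → Tree
  | [], S, _ => S
  | [k], S, T => .node (S.children.take k ++ T.children ++ S.children.drop (k + 1))
  | k :: P, S, T =>
      .node (S.children.take k ++
        [insTree P (S.children.getD k (.node [])) (T.children.headD (.node []))] ++
        S.children.drop (k + 1))

/-- The branch of `S ≪ P , T ≫` induced by a branch `Q` of `T`. -/
def insBranch : List ℕ → List ℕ → List ℕ
  | [], Q => Q
  | [k], q :: Q => (q + k) :: Q
  | [k], [] => [k]
  | k :: P, Q => k :: insBranch P (Q.drop 1)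

/-- The boundary `∂ₙ` of a tree (truncation at depth `n`). -/
def Tree.bdry : ℕ → Tree → Tree
  | 0, _ => .node []
  | _ + 1, .node [] => .node []
  | n + 1, .node (t :: ts) => .node (Tree.bdry n t :: (Tree.bdry (n + 1) (.node ts)).children)

/-! ### Syntax of Catt -/

mutual
inductive Ty : Type
  | star : Ty
  | arr : Tm → Ty → Tm → Ty
inductive Tm : Type
  | var : Path → Tm
  | coh : Tree → Ty → (Path → Tm) → Tm
end

/-- A substitution assigns a term to each variable (path). -/
abbrev Sub := Path → Tm

/-- Contexts: named contexts whose variable names are paths. -/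
abbrev Ctx := List (Path × Ty)

def Ty.dim : Ty → ℕ
  | .star => 0
  | .arr _ A _ => A.dim + 1

def Tm.dim : Tm → ℕ
  | .var p => p.length - 1
  | .coh _ A _ => A.dim

/-- Applying a substitution to a term. -/
def Tm.sub : Tm → Sub → Tm
  | .var p, σ => σ p
  | .coh T A τ, σ => .coh T A (fun p => (τ p).sub σ)

/-- Applying a substitution to a type. -/
def Ty.sub : Ty → Sub → Ty
  | .star, _ => .star
  | .arr s A t, σ => .arr (s.sub σ) (A.sub σ) (t.sub σ)

/-- Composition of substitutions, diagrammatic order: `(σ.comp τ) = σ` followed by `τ`. -/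
def Sub.comp (σ τ : Sub) : Sub := fun p => (σ p).sub τ

/-- The identity substitution. -/
def Sub.id : Sub := fun p => .var p

/-! ### Suspension -/

mutual
/-- Suspension of a term. -/
def Tm.susp : Tm → Tm
  | .var p => .var (0 :: p)
  | .coh T A σ => .coh T.susp A.susp (fun p => match p with
      | [j] => .var [j]
      | 0 :: q => (σ q).susp
      | _ => .var p)
/-- Suspension of a type. -/
def Ty.susp : Ty → Ty
  | .star => .arr (.var [0]) .star (.var [1])
  | .arr s A t => .arr s.susp A.susp t.susp
end

/-- Suspension of a substitution. -/
def suspSub (σ : Sub) : Sub := fun p => match p with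
  | [j] => .var [j]
  | 0 :: q => (σ q).susp
  | _ => .var p

/-- Suspension of a context. -/
def ctxSusp (Γ : Ctx) : Ctx :=
  ([0], .star) :: ([1], .star) :: Γ.map (fun e => (0 :: e.1, e.2.susp))

/-- The substitution renaming a suspended term into the `k`-th wedge component
of a tree: `N ↦ [k]`, `S ↦ [k+1]`, `0 :: q ↦ k :: q`. -/
def compSub (k : ℕ) : Sub := fun p => match p with
  | [j] => .var [j + k]
  | 0 :: q => .var (k :: q)
  | _ => .var p

/-- The substitution including a tree as `m` consecutive wedge components
starting at offset `k`. -/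
def wedgeShift (k : ℕ) : Sub := fun p => match p with
  | j :: q => .var ((j + k) :: q)
  | [] => .var []

/-- The type of the variable at path `p` in the pasting context of a tree. -/
def pathType : Path → Tree → Ty
  | [], _ => .star
  | [_], _ => .star
  | k :: p, S => ((pathType p (S.children.getD k (.node []))).susp).sub (compSub k)

/-- All variable paths of a tree, with an offset for the 0-dimensional endpoints. -/
def treePathsAux : Tree → ℕ → List Path
  | .node [], k => [[k]]
  | .node (t :: ts), k =>
      [k] :: (treePathsAux t 0).map (k :: ·) ++ treePathsAux (.node ts) (k + 1)

/-- All variable paths of a tree. -/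
def treePaths (T : Tree) : List Path := treePathsAux T 0

/-- The pasting context `⌊T⌋` generated by a tree. -/
def treeCtx (T : Tree) : Ctx := (treePaths T).map (fun p => (p, pathType p T))

/-! ### Disc substitutions and unbiased constructions -/

/-- The list of source/target pairs of a type, lowest dimension first. -/
def Ty.srcs : Ty → List (Tm × Tm)
  | .star => []
  | .arr s A t => A.srcs ++ [(s, t)]

/-- The substitution `{A, u} : D^{dim A} → Γ` from a disc determined by a type
and a term. -/
def discSub (A : Ty) (u : Tm) : Sub := fun p =>
  let L := A.srcs
  let k := p.length - 1
  if k < L.length then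
    (if p.getLastD 0 = 0 then (L.getD k (u, u)).1 else (L.getD k (u, u)).2)
  else u

/-- The boundary inclusion `δₙᵉ : ∂ₙ T → T` (`ε = false` is the source). -/
def incl (ε : Bool) : ℕ → Tree → Sub
  | 0, T => fun _ => if ε then .var [T.children.length] else .var [0]
  | n + 1, T => fun p => match p with
      | [] => .var []
      | [j] => .var [j]
      | i :: q => ((incl ε n (T.children.getD i (.node []))) q).susp.sub (compSub i)

open Classical in
mutual
/-- The unbiased type `𝒰_T^n`. -/
noncomputable def unbiasedType : Tree → ℕ → Ty
  | _, 0 => .star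
  | T, n + 1 =>
      .arr ((unbiasedTm (Tree.bdry n T) n).sub (incl false n T))
           (unbiasedType T n)
           ((unbiasedTm (Tree.bdry n T) n).sub (incl true n T))
termination_by T n => 2 * n
/-- The unbiased term `𝒯_T^n`. -/
noncomputable def unbiasedTm : Tree → ℕ → Tm
  | T, n =>
      if T = discTree n then .var T.maxPath
      else .coh T (unbiasedType T n) (fun p => .var p)
termination_by T n => 2 * n + 1
end

/-- The unbiased coherence `𝒞_T^n`. -/
noncomputable def unbiasedCoh (T : Tree) (n : ℕ) : Tm :=
  .coh T (unbiasedType T n) (fun p => .var p)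

/-- The identity coherence `𝟙` on a term `u` of type `A`. -/
noncomputable def idCoh (A : Ty) (u : Tm) : Tm :=
  (unbiasedCoh (discTree A.dim) (A.dim + 1)).sub (discSub A u)

/-! ### Insertion -/

/-- The interior substitution `ι : T → S ≪ P , T ≫`. -/
def iota : List ℕ → Tree → Tree → Sub
  | [], _, _ => fun p => .var p
  | [k], _, _ => wedgeShift k
  | k :: P, S, T => fun p =>
      ((suspSub (iota P (S.children.getD k (.node [])) (T.children.headD (.node [])))) p).sub
        (compSub k)

/-- The exterior substitution `κ : S → S ≪ P , T ≫`. -/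
noncomputable def kappa : List ℕ → Tree → Tree → Sub
  | [], _, _ => fun p => .var p
  | [k], S, T =>
      let m := T.children.length
      let n := (S.children.getD k (.node [])).dim + 1
      fun p => match p with
        | [] => .var []
        | [j] => if j ≤ k then .var [j] else .var [j + m - 1]
        | i :: q =>
          if i < k then .var (i :: q)
          else if i = k then
            ((discSub (unbiasedType T n) (unbiasedCoh T n)) (0 :: q)).sub (wedgeShift k)
          else .var ((i + m - 1) :: q)
  | k :: P, S, T => fun p => match p with
      | [] => .var []
      | [j] => .var [j]
      | i :: q =>
        if i = k then
          ((suspSub (kappa P (S.children.getD k (.node [])) (T.children.headD (.node []))))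
            (0 :: q)).sub (compSub k)
        else .var (i :: q)

/-- The inserted substitution `σ ≪ P , τ ≫ : S ≪ P , T ≫ → Γ`. -/
def insSub : List ℕ → Tree → Tree → Sub → Sub → Sub
  | [], _, _, σ, _ => σ
  | [k], _, T, σ, τ =>
      let m := T.children.length
      fun p => match p with
        | [] => σ []
        | [j] => if j < k then σ [j] else if j ≤ k + m then τ [j - k] else σ [j - m + 1]
        | i :: q =>
          if i < k then σ (i :: q)
          else if i < k + m then τ ((i - k) :: q)
          else σ ((i - m + 1) :: q)
  | k :: P, S, T, σ, τ => fun p => match p with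
      | [] => σ []
      | [j] => if j = k then τ [0] else if j = k + 1 then τ [1] else σ [j]
      | i :: q =>
        if i = k then
          insSub P (S.children.getD k (.node [])) (T.children.headD (.node []))
            (fun r => σ (k :: r)) (fun r => τ (0 :: r)) q
        else σ (i :: q)

/-! ### Syntactic equality (α-equality; substitutions are compared on all
valid variable paths of the relevant tree) -/

mutual
inductive TmEqv : Tm → Tm → Prop
  | var (p : Path) : TmEqv (.var p) (.var p)
  | coh (T : Tree) (A B : Ty) (σ τ : Sub) : TyEqv A B →
      (∀ p, IsPath T p → TmEqv (σ p) (τ p)) → TmEqv (.coh T A σ) (.coh T B τ)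
inductive TyEqv : Ty → Ty → Prop
  | star : TyEqv .star .star
  | arr {s s' t t' : Tm} {A A' : Ty} : TmEqv s s' → TyEqv A A' → TmEqv t t' →
      TyEqv (.arr s A t) (.arr s' A' t')
end

/-- Syntactic equality of substitutions out of (the context of) a tree. -/
def SubEqv (dom : Tree) (σ τ : Sub) : Prop := ∀ p, IsPath dom p → TmEqv (σ p) (τ p)

/-- Syntactic equality of substitutions on all locally maximal variables
(`σ ≡ᵐᵃˣ τ`). -/
def MaxEqv (dom : Tree) (σ τ : Sub) : Prop := ∀ p, IsMaxPath dom p → TmEqv (σ p) (τ p)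

/-! ### Insertion points and redexes -/

/-- An insertion point `(S, P, T)`. -/
def InsPoint (S : Tree) (P : List ℕ) (T : Tree) : Prop :=
  IsBranch S P ∧ bh P ≤ T.th

/-- An insertion redex `(S, P, T, Γ, σ, τ)` (the codomain context is implicit in
the raw substitutions): `⌊P⌋[σ] ≡ 𝒞_T^{lh(P)}[τ]`. -/
def InsRedex (S : Tree) (P : List ℕ) (T : Tree) (σ τ : Sub) : Prop :=
  InsPoint S P T ∧ TmEqv (σ (branchVar P S)) ((unbiasedCoh T (lh P S)).sub τ)

/-! ### Identities, rewrite rules, reduction -/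

/-- Identity terms: terms of the form `𝟙[σ]`. -/
def isIdentity (t : Tm) : Prop :=
  ∃ n σ, t = .coh (discTree n) (unbiasedType (discTree n) (n + 1)) σ

/-- The three generating rewrite rules of Catt_sua: disc removal,
endo-coherence removal, and insertion. -/
inductive SuaRule : Tm → Tm → Prop
  | disc (n : ℕ) (σ : Sub) :
      SuaRule (.coh (discTree n) (unbiasedType (discTree n) n) σ) (σ (discTree n).maxPath)
  | ecr (T : Tree) (s : Tm) (A : Ty) (σ : Sub) :
      ¬ isIdentity (.coh T (.arr s A s) σ) →
      SuaRule (.coh T (.arr s A s) σ) (idCoh (A.sub σ) (s.sub σ))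
  | ins (S T : Tree) (P : List ℕ) (A : Ty) (σ τ : Sub) :
      InsRedex S P T σ τ →
      (lh P S = T.dim ∨ T = discTree (lh P S - 1)) →
      ¬ isIdentity (.coh S A σ) →
      SuaRule (.coh S A σ)
        (.coh (insTree P S T) (A.sub (kappa P S T)) (insSub P S T σ τ))

mutual
/-- One-step reduction, flagged by whether the derivation uses the cell rule. -/
inductive Red : Bool → Tm → Tm → Prop
  | rule {s t : Tm} : SuaRule s t → Red false s t
  | cell {b : Bool} {A B : Ty} (T : Tree) (σ : Sub) : RedTy b A B →
      Red true (.coh T A σ) (.coh T B σ)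
  | arg {b : Bool} (T : Tree) (A : Ty) (σ τ : Sub) (p : Path) : IsPath T p →
      Red b (σ p) (τ p) → (∀ q, IsPath T q → q ≠ p → TmEqv (σ q) (τ q)) →
      Red b (.coh T A σ) (.coh T A τ)
inductive RedTy : Bool → Ty → Ty → Prop
  | src {b : Bool} {s s' t : Tm} {A : Ty} : Red b s s' → RedTy b (.arr s A t) (.arr s' A t)
  | base {b : Bool} {s t : Tm} {A A' : Ty} : RedTy b A A' → RedTy b (.arr s A t) (.arr s A' t)
  | tgt {b : Bool} {s t t' : Tm} {A : Ty} : Red b t t' → RedTy b (.arr s A t) (.arr s A t')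
end

/-- One-step reduction of terms. -/
def Red1 (s t : Tm) : Prop := ∃ b, Red b s t

/-- Multi-step reduction of terms. -/
def RedStar : Tm → Tm → Prop := Relation.ReflTransGen Red1

/-- Multi-step reduction of types. -/
def RedTyStar : Ty → Ty → Prop := Relation.ReflTransGen (fun A B => ∃ b, RedTy b A B)

/-- One-step reduction of substitutions out of a tree, flagged. -/
def RedSubF (b : Bool) (dom : Tree) (σ τ : Sub) : Prop :=
  ∃ p, IsPath dom p ∧ Red b (σ p) (τ p) ∧ ∀ q, IsPath dom q → q ≠ p → TmEqv (σ q) (τ q)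

/-! ### Free variables and support -/

mutual
inductive FvTm : Tm → Path → Prop
  | var (p : Path) : FvTm (.var p) p
  | coh {T : Tree} {A : Ty} {σ : Sub} {p q : Path} : IsPath T p → FvTm (σ p) q →
      FvTm (.coh T A σ) q
inductive FvTy : Ty → Path → Prop
  | src {s t : Tm} {A : Ty} {q : Path} : FvTm s q → FvTy (.arr s A t) q
  | base {s t : Tm} {A : Ty} {q : Path} : FvTy A q → FvTy (.arr s A t) q
  | tgt {s t : Tm} {A : Ty} {q : Path} : FvTm t q → FvTy (.arr s A t) q
end

/-- Downward closure of a set of variables in a context. -/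
inductive Closure (Γ : Ctx) (P : Path → Prop) : Path → Prop
  | base {p : Path} : P p → Closure Γ P p
  | step {p q : Path} {A : Ty} : Closure Γ P p → (p, A) ∈ Γ → FvTy A q → Closure Γ P q

/-- Support of a term. -/
def Tm.supp (Γ : Ctx) (t : Tm) : Set Path := {q | Closure Γ (FvTm t) q}

/-- Support of a substitution out of a tree. -/
def subSupp (Γ : Ctx) (dom : Tree) (σ : Sub) : Set Path :=
  {q | Closure Γ (fun r => ∃ p, IsPath dom p ∧ FvTm (σ p) r) q}

/-! ### Typing and definitional equality, parameterized by a rule set -/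

mutual
inductive CtxTy (R : Ctx → Tm → Tm → Prop) : Ctx → Prop
  | nil : CtxTy R []
  | cons {Γ : Ctx} {p : Path} {A : Ty} : CtxTy R Γ → TyTy R Γ A →
      CtxTy R ((p, A) :: Γ)
inductive TyTy (R : Ctx → Tm → Tm → Prop) : Ctx → Ty → Prop
  | star {Γ : Ctx} : TyTy R Γ .star
  | arr {Γ : Ctx} {s t : Tm} {A : Ty} : TyTy R Γ A → TmTy R Γ s A → TmTy R Γ t A →
      TyTy R Γ (.arr s A t)
inductive TmTy (R : Ctx → Tm → Tm → Prop) : Ctx → Tm → Ty → Prop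
  | var {Γ : Ctx} {p : Path} {A : Ty} : CtxTy R Γ → (p, A) ∈ Γ → TmTy R Γ (.var p) A
  | coh {Γ : Ctx} (S : Tree) (s t : Tm) (A : Ty) (σ : Sub) :
      TyTy R (treeCtx S) (.arr s A t) →
      (∀ p B, (p, B) ∈ treeCtx S → TmTy R Γ (σ p) (B.sub σ)) →
      Tm.supp (treeCtx S) s =
        subSupp (treeCtx S) (Tree.bdry (S.dim - 1) S) (incl false (S.dim - 1) S) →
      Tm.supp (treeCtx S) t =
        subSupp (treeCtx S) (Tree.bdry (S.dim - 1) S) (incl true (S.dim - 1) S) →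
      TmTy R Γ (.coh S (.arr s A t) σ) ((Ty.arr s A t).sub σ)
  | cohFull {Γ : Ctx} (S : Tree) (s t : Tm) (A : Ty) (σ : Sub) :
      TyTy R (treeCtx S) (.arr s A t) →
      (∀ p B, (p, B) ∈ treeCtx S → TmTy R Γ (σ p) (B.sub σ)) →
      Tm.supp (treeCtx S) s = {q | IsPath S q} →
      Tm.supp (treeCtx S) t = {q | IsPath S q} →
      TmTy R Γ (.coh S (.arr s A t) σ) ((Ty.arr s A t).sub σ)
  | conv {Γ : Ctx} {u : Tm} {A B : Ty} : TmTy R Γ u A → TyEq R Γ A B → TmTy R Γ u B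
inductive TmEq (R : Ctx → Tm → Tm → Prop) : Ctx → Tm → Tm → Prop
  | var {Γ : Ctx} (p : Path) : TmEq R Γ (.var p) (.var p)
  | symm {Γ : Ctx} {s t : Tm} : TmEq R Γ s t → TmEq R Γ t s
  | trans {Γ : Ctx} {s t u : Tm} : TmEq R Γ s t → TmEq R Γ t u → TmEq R Γ s u
  | coh {Γ : Ctx} (S : Tree) (A B : Ty) (σ τ : Sub) : TyEq R (treeCtx S) A B →
      (∀ p C, (p, C) ∈ treeCtx S → TmEq R Γ (σ p) (τ p)) →
      TmEq R Γ (.coh S A σ) (.coh S B τ)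
  | rule {Γ : Ctx} {s t : Tm} (A : Ty) : R Γ s t → TmTy R Γ s A → TmEq R Γ s t
inductive TyEq (R : Ctx → Tm → Tm → Prop) : Ctx → Ty → Ty → Prop
  | star {Γ : Ctx} : TyEq R Γ .star .star
  | arr {Γ : Ctx} {s s' t t' : Tm} {A A' : Ty} : TmEq R Γ s s' → TyEq R Γ A A' →
      TmEq R Γ t t' → TyEq R Γ (.arr s A t) (.arr s' A' t')
end

/-- Well-typedness of a substitution: `Γ ⊢ σ : Δ`. -/
def SubTyped (R : Ctx → Tm → Tm → Prop) (Γ : Ctx) (σ : Sub) (Δ : Ctx) : Prop :=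
  ∀ p A, (p, A) ∈ Δ → TmTy R Γ (σ p) (A.sub σ)

/-- Definitional equality of substitutions with domain `Δ`: `Γ ⊢ σ = τ`. -/
def SubDefEq (R : Ctx → Tm → Tm → Prop) (Γ Δ : Ctx) (σ τ : Sub) : Prop :=
  ∀ p A, (p, A) ∈ Δ → TmEq R Γ (σ p) (τ p)

/-- Definitional equality of substitutions out of a tree on all locally maximal
variables (`σ =ᵐᵃˣ τ`). -/
def MaxDefEq (R : Ctx → Tm → Tm → Prop) (Γ : Ctx) (dom : Tree) (σ τ : Sub) : Prop :=
  ∀ p, IsMaxPath dom p → TmEq R Γ (σ p) (τ p)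

/-! ### Conditions on rule sets -/

/-- The lifting condition. -/
def LiftCond (R : Ctx → Tm → Tm → Prop) : Prop :=
  ∀ Γ s t q A, R Γ s t → (∃ B, TmTy R ((q, A) :: Γ) s B) → TmEq R ((q, A) :: Γ) s t

/-- The substitution condition. -/
def SubCond (R : Ctx → Tm → Tm → Prop) : Prop :=
  ∀ Γ s t Δ (σ : Sub), R Γ s t → (∀ p A, (p, A) ∈ Γ → TmTy R Δ (σ p) (A.sub σ)) →
    (∃ C, TmTy R Δ (s.sub σ) C) → TmEq R Δ (s.sub σ) (t.sub σ)

/-- The suspension condition. -/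
def SuspCond (R : Ctx → Tm → Tm → Prop) : Prop :=
  ∀ Γ s t, R Γ s t → (∃ A, TmTy R (ctxSusp Γ) s.susp A) →
    TmEq R (ctxSusp Γ) s.susp t.susp

/-- A rule set is tame if it satisfies the lifting, substitution and suspension
conditions. -/
def Tame (R : Ctx → Tm → Tm → Prop) : Prop := LiftCond R ∧ SubCond R ∧ SuspCond R

/-- The rule set generating Catt_sua. -/
def suaR : Ctx → Tm → Tm → Prop := fun _ s t => SuaRule s t

/-- The `n`-bounded restriction of the sua rule set, generating `n`-bounded
definitional equality `=ₙ`. -/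
def suaBnd (n : ℕ) : Ctx → Tm → Tm → Prop := fun Γ s t => suaR Γ s t ∧ s.dim < n

/-! ### Syntactic complexity -/

open Classical in
/-- Syntactic complexity of a term: an ordinal below `ω ^ ω`. -/
noncomputable def Tm.sc : Tm → Ordinal :=
  Tm.rec (motive_1 := fun _ => Ordinal) (motive_2 := fun _ => Ordinal)
    0 (fun _ _ _ _ _ _ => 0)
    (fun _ => 0)
    (fun T A σ _ ih =>
      (if isIdentity (.coh T A σ) then Ordinal.omega0 ^ (A.dim : Ordinal)
       else Ordinal.omega0 ^ (A.dim : Ordinal) ♯ Ordinal.omega0 ^ (A.dim : Ordinal)) ♯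
        ((treePaths T).map ih).foldr (· ♯ ·) 0)

/-- Syntactic complexity of a substitution out of a tree. -/
noncomputable def scSub (dom : Tree) (σ : Sub) : Ordinal :=
  ((treePaths dom).map (fun p => (σ p).sc)).foldr (· ♯ ·) 0

/-! ### Helper lemmas -/

section ListHelpers

variable {α : Type _}

theorem getD_append_left : ∀ (l₁ l₂ : List α) (i : ℕ) (d : α), i < l₁.length →
    (l₁ ++ l₂).getD i d = l₁.getD i d
  | [], _, _, _, h => by simp at h
  | a :: l₁, l₂, 0, d, _ => rfl
  | a :: l₁, l₂, i + 1, d, h =>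
      getD_append_left l₁ l₂ i d (by simpa using h)

theorem getD_append_right : ∀ (l₁ l₂ : List α) (i : ℕ) (d : α), l₁.length ≤ i →
    (l₁ ++ l₂).getD i d = l₂.getD (i - l₁.length) d
  | [], _, _, _, _ => by simp
  | a :: l₁, l₂, 0, d, h => by simp at h
  | a :: l₁, l₂, i + 1, d, h => by
      simpa using getD_append_right l₁ l₂ i d (by simpa using h)

theorem getD_take : ∀ (l : List α) (k i : ℕ) (d : α), i < k →
    (l.take k).getD i d = l.getD i d
  | [], _, _, _, _ => by simp
  | a :: l, k + 1, 0, d, _ => rfl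
  | a :: l, k + 1, i + 1, d, h => getD_take l k i d (by omega)

theorem getD_drop : ∀ (l : List α) (k i : ℕ) (d : α),
    (l.drop k).getD i d = l.getD (k + i) d
  | [], k, i, d => by simp
  | a :: l, 0, i, d => by simp
  | a :: l, k + 1, i, d => by
      rw [show k + 1 + i = (k + i) + 1 by omega]
      simpa using getD_drop l k i d

theorem getD_map (f : α → α) : ∀ (l : List α) (i : ℕ) (d d' : α), i < l.length →
    (l.map f).getD i d = f (l.getD i d')
  | [], _, _, _, h => by simp at h
  | a :: l, 0, d, d', _ => rfl
  | a :: l, i + 1, d, d', h => getD_map f l i d d' (by simpa using h)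

end ListHelpers

theorem Tree.children_node (l : List Tree) : (Tree.node l).children = l := rfl

theorem Tree.bdry_zero (T : Tree) : Tree.bdry 0 T = .node [] := by simp [Tree.bdry]

theorem Tree.bdry_node : ∀ (n : ℕ) (l : List Tree),
    Tree.bdry (n + 1) (.node l) = .node (l.map (Tree.bdry n))
  | n, [] => by simp [Tree.bdry]
  | n, t :: ts => by
      have h : Tree.bdry (n + 1) (.node (t :: ts)) =
          .node (Tree.bdry n t :: (Tree.bdry (n + 1) (.node ts)).children) := by
        simp [Tree.bdry]
      rw [h, Tree.bdry_node n ts]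
      rfl

theorem Tree.dim_node_cons (t : Tree) (ts : List Tree) :
    Tree.dim (.node (t :: ts)) = max (t.dim + 1) (Tree.dim (.node ts)) := by
  simp [Tree.dim]

theorem Tree.dim_node_nil : Tree.dim (.node []) = 0 := by simp [Tree.dim]

theorem Tree.dim_getD_lt {l : List Tree} {k : ℕ} (h : k < l.length) :
    (l.getD k (.node [])).dim + 1 ≤ Tree.dim (.node l) := by
  induction l generalizing k with
  | nil => simp at h
  | cons t ts ih =>
      cases k with
      | zero => simp [Tree.dim_node_cons, List.getD]
      | succ k =>
          have := ih (k := k) (by simpa using h)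
          simp only [Tree.dim_node_cons, List.getD_cons_succ]
          omega

theorem Tree.dim_node_eq_zero {l : List Tree} (h : Tree.dim (.node l) = 0) : l = [] := by
  cases l with
  | nil => rfl
  | cons t ts =>
      rw [Tree.dim_node_cons] at h
      omega

theorem Tree.dim_mem_lt {l : List Tree} {t : Tree} (h : t ∈ l) :
    t.dim + 1 ≤ Tree.dim (.node l) := by
  induction l with
  | nil => simp at h
  | cons a ts ih =>
      rcases List.mem_cons.mp h with h | h
      · subst h; simp [Tree.dim_node_cons]
      · have := ih h
        simp only [Tree.dim_node_cons]
        omega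

theorem Tree.bdry_eq_self : ∀ (n : ℕ) (T : Tree), T.dim ≤ n → T.bdry n = T := by
  intro n
  induction n with
  | zero =>
      intro T h
      obtain ⟨l⟩ := T
      rw [Tree.dim_node_eq_zero (Nat.le_zero.mp h), Tree.bdry_zero]
  | succ n ih =>
      intro T h
      obtain ⟨l⟩ := T
      rw [Tree.bdry_node]
      congr 1
      have hl : ∀ t ∈ l, Tree.bdry n t = t := by
        intro t ht
        exact ih t (by have := Tree.dim_mem_lt (l := l) ht; omega)
      calc l.map (Tree.bdry n) = l.map id := List.map_congr_left hl
        _ = l := l.map_id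

theorem Tree.th_node_nil : Tree.th (.node []) = 0 := by simp [Tree.th]

theorem Tree.th_node_single (t : Tree) : Tree.th (.node [t]) = t.th + 1 := by
  simp [Tree.th]

theorem Tree.th_node_pair (a b : Tree) (l : List Tree) :
    Tree.th (.node (a :: b :: l)) = 0 := by simp [Tree.th]

theorem Tree.th_bdry_le : ∀ (n : ℕ) (T : Tree), (T.bdry n).th ≤ T.th := by
  intro n
  induction n with
  | zero => intro T; rw [Tree.bdry_zero, Tree.th_node_nil]; omega
  | succ n ih =>
      intro T
      obtain ⟨l⟩ := T
      rw [Tree.bdry_node]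
      match l with
      | [] => simp [Tree.th_node_nil]
      | [t] =>
          simp only [List.map]
          rw [Tree.th_node_single, Tree.th_node_single]
          exact Nat.succ_le_succ (ih t)
      | a :: b :: l => simp [Tree.th_node_pair]

theorem Tree.th_disc (d : ℕ) : (discTree d).th = d := by
  induction d with
  | zero => exact Tree.th_node_nil
  | succ d ih => rw [show discTree (d+1) = .node [discTree d] from rfl, Tree.th_node_single, ih]

theorem Tree.dim_disc (d : ℕ) : (discTree d).dim = d := by
  induction d with
  | zero => exact Tree.dim_node_nil
  | succ d ih =>
      rw [show discTree (d+1) = .node [discTree d] from rfl, Tree.dim_node_cons, ih,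
        Tree.dim_node_nil]
      omega

theorem Tree.bdry_disc (n d : ℕ) : Tree.bdry n (discTree d) = discTree (min n d) := by
  induction n generalizing d with
  | zero => rw [Tree.bdry_zero, Nat.zero_min]; rfl
  | succ n ih =>
      cases d with
      | zero => rw [show discTree 0 = Tree.node [] from rfl, Tree.bdry_node, Nat.min_zero]; rfl
      | succ d =>
          rw [show discTree (d+1) = .node [discTree d] from rfl, Tree.bdry_node]
          simp only [List.map, ih]
          rw [show Tree.node [discTree (min n d)] = discTree (min n d + 1) from rfl]
          congr 1
          omega

theorem Tree.linear_eq_disc : ∀ (d : ℕ) (T : Tree), T.dim = d → T.linear → T = discTree d := by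
  intro d
  induction d with
  | zero =>
      intro T hd _
      obtain ⟨l⟩ := T
      rw [Tree.dim_node_eq_zero hd]
      rfl
  | succ d ih =>
      intro T hd hlin
      obtain ⟨l⟩ := T
      match l with
      | [] => rw [Tree.dim_node_nil] at hd; omega
      | [t] =>
          have hdim : Tree.dim (.node [t]) = t.dim + 1 := by
            rw [Tree.dim_node_cons, Tree.dim_node_nil]; omega
          have hth : Tree.th (.node [t]) = t.th + 1 := Tree.th_node_single t
          have hlin' : t.linear := by
            have := hlin
            unfold Tree.linear at this ⊢
            omega
          have htd : t.dim = d := by omega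
          rw [ih t htd hlin', show discTree (d+1) = .node [discTree d] from rfl]
      | a :: b :: l =>
          exfalso
          have h1 : Tree.th (.node (a :: b :: l)) = 0 := Tree.th_node_pair a b l
          have h2 : 1 ≤ Tree.dim (.node (a :: b :: l)) := by
            rw [Tree.dim_node_cons]; omega
          unfold Tree.linear at hlin
          omega


/-! ### Path and branch lemmas -/

theorem isPath_ne_nil {T : Tree} {p : Path} (h : IsPath T p) : p ≠ [] := by
  cases h <;> simp

theorem isMaxPath_ne_nil {T : Tree} {p : Path} (h : IsMaxPath T p) : p ≠ [] := by
  cases h <;> simp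

theorem isMaxPath_node_inv {l : List Tree} (hl : l ≠ []) {p : Path}
    (h : IsMaxPath (.node l) p) :
    ∃ i q, p = i :: q ∧ i < l.length ∧ IsMaxPath (l.getD i (.node [])) q := by
  cases h with
  | here => exact absurd rfl hl
  | there _ i q hi hq => exact ⟨i, q, rfl, hi, hq⟩

theorem maxPath_disc : ∀ (d : ℕ), (discTree d).maxPath = List.replicate d 0 ++ [0]
  | 0 => rfl
  | d + 1 => by
      rw [show discTree (d+1) = Tree.node [discTree d] from rfl]
      show 0 :: (discTree d).maxPath = _
      rw [maxPath_disc d]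
      simp [List.replicate_succ]

theorem isPath_maxPath_disc : ∀ (d : ℕ), IsPath (discTree d) (discTree d).maxPath
  | 0 => .point [] 0 (by simp)
  | d + 1 => by
      rw [show discTree (d+1) = Tree.node [discTree d] from rfl]
      show IsPath (Tree.node [discTree d]) (0 :: (discTree d).maxPath)
      exact .deeper _ 0 _ (by simp) (isPath_maxPath_disc d)

theorem isMaxPath_disc : ∀ (d : ℕ) (q : Path), IsMaxPath (discTree d) q →
    q = List.replicate d 0 ++ [0]
  | 0, q, h => by cases h with
      | here => rfl
      | there _ k p hk _ => simp at hk
  | d + 1, q, h => by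
      cases h with
      | there _ k p hk hp =>
          simp only [Tree.children_node, List.length_singleton] at hk
          interval_cases k
          have := isMaxPath_disc d p (by simpa using hp)
          simp [this, List.replicate_succ]

theorem branchVar_ne_nil : ∀ (P : List ℕ) (S : Tree), branchVar P S ≠ [] := by
  intro P S
  match P with
  | [] =>
      show S.maxPath ≠ []
      obtain ⟨l⟩ := S
      cases l <;> simp [Tree.maxPath]
  | [k] => simp [branchVar]
  | k :: a :: P => simp [branchVar]

theorem lh_cons {k : ℕ} {P : List ℕ} (hP : P ≠ []) (S : Tree) :
    lh (k :: P) S = lh P (S.children.getD k (.node [])) + 1 := by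
  match P with
  | [] => exact absurd rfl hP
  | a :: P =>
      show (branchVar (k :: a :: P) S).length - 1 = _
      rw [show branchVar (k :: a :: P) S = k :: branchVar (a :: P) (S.children.getD k (.node []))
        from rfl]
      have := branchVar_ne_nil (a :: P) (S.children.getD k (.node []))
      have hlen : 1 ≤ (branchVar (a :: P) (S.children.getD k (.node []))).length := by
        cases h : branchVar (a :: P) (S.children.getD k (.node [])) with
        | nil => exact absurd h this
        | cons _ _ => simp
      simp only [List.length_cons, lh]
      omega

theorem lh_single (k : ℕ) (S : Tree) :
    lh [k] S = ((S.children.getD k (.node [])).maxPath).length := by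
  show (k :: (S.children.getD k (.node [])).maxPath).length - 1 = _
  simp

theorem two_le_branchVar_len {S : Tree} {P : List ℕ} (h : IsBranch S P) :
    1 ≤ lh P S := by
  induction h with
  | here ts k hk hlin =>
      rw [lh_single]
      obtain ⟨l⟩ := (Tree.node ts).children.getD k (.node [])
      cases l <;> simp [Tree.maxPath]
  | there ts k P hk hP hbr ih =>
      rw [lh_cons hP]
      omega

theorem th_one_node_single {T : Tree} (h : 1 ≤ T.th) : ∃ t, T = .node [t] := by
  obtain ⟨l⟩ := T
  match l with
  | [] => rw [Tree.th_node_nil] at h; omega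
  | [t] => exact ⟨t, rfl⟩
  | a :: b :: l => rw [Tree.th_node_pair] at h; omega

/-! ### The path function underlying boundary inclusions -/

def inclP (ε : Bool) : ℕ → Tree → Path → Path
  | 0, T, _ => if ε then [T.children.length] else [0]
  | _ + 1, _, [] => []
  | _ + 1, _, [j] => [j]
  | n + 1, T, i :: j :: q => i :: inclP ε n (T.children.getD i (.node [])) (j :: q)

theorem inclP_ne_nil (ε : Bool) : ∀ (n : ℕ) (T : Tree) (p : Path), p ≠ [] →
    inclP ε n T p ≠ []
  | 0, T, p, _ => by cases ε <;> simp [inclP]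
  | n + 1, T, [], h => absurd rfl h
  | n + 1, T, [j], _ => by simp [inclP]
  | n + 1, T, i :: j :: q, _ => by simp [inclP]

theorem incl_eq_var (ε : Bool) : ∀ (n : ℕ) (T : Tree) (p : Path), p ≠ [] →
    incl ε n T p = .var (inclP ε n T p)
  | 0, T, p, _ => by cases ε <;> simp [incl, inclP]
  | n + 1, T, [], h => absurd rfl h
  | n + 1, T, [j], _ => by simp [incl, inclP]
  | n + 1, T, i :: j :: q, _ => by
      have hrec := incl_eq_var ε n (T.children.getD i (.node [])) (j :: q) (by simp)
      have hne := inclP_ne_nil ε n (T.children.getD i (.node [])) (j :: q) (by simp)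
      show (incl ε n (T.children.getD i (.node [])) (j :: q)).susp.sub (compSub i) = _
      rw [hrec]
      cases hr : inclP ε n (T.children.getD i (.node [])) (j :: q) with
      | nil => exact absurd hr hne
      | cons b r =>
          show Tm.sub (.var (0 :: b :: r)) (compSub i) = _
          show compSub i (0 :: b :: r) = _
          rw [show compSub i (0 :: b :: r) = .var (i :: b :: r) from rfl]
          rw [show inclP ε (n+1) T (i :: j :: q) =
            i :: inclP ε n (T.children.getD i (.node [])) (j :: q) from rfl, hr]

theorem inclP_fix (ε : Bool) : ∀ (n : ℕ) (T : Tree) (p : Path), IsPath T p →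
    T.dim ≤ n → inclP ε n T p = p := by
  intro n
  induction n with
  | zero =>
      intro T p hp hd
      cases hp with
      | point ts j hj =>
          have : ts = [] := Tree.dim_node_eq_zero (Nat.le_zero.mp hd)
          subst this
          simp only [List.length_nil, Nat.le_zero] at hj
          subst hj
          cases ε <;> simp [inclP, Tree.children_node]
      | deeper ts k p hk hp =>
          exfalso
          have := Tree.dim_getD_lt hk
          omega
  | succ n ih =>
      intro T p hp hd
      cases hp with
      | point ts j hj => simp [inclP]
      | deeper ts k p hk hp =>
          cases p with
          | nil => exact absurd (isPath_ne_nil hp) (by simp)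
          | cons a q =>
              show k :: inclP ε n (ts.getD k (.node [])) (a :: q) = k :: a :: q
              rw [ih _ _ hp (by have := Tree.dim_getD_lt hk; omega)]

theorem incl_nil (ε : Bool) (n : ℕ) (T : Tree) : incl ε (n + 1) T [] = .var [] := by
  simp [incl]

theorem incl_singleton (ε : Bool) (n : ℕ) (T : Tree) (j : ℕ) :
    incl ε (n + 1) T [j] = .var [j] := by simp [incl]

theorem inclP_disc_lt (ε : Bool) : ∀ (m d : ℕ), m < d →
    inclP ε m (discTree d) (List.replicate m 0 ++ [0]) =
      List.replicate m 0 ++ [if ε then 1 else 0] := by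
  intro m
  induction m with
  | zero =>
      intro d hd
      obtain ⟨d', rfl⟩ : ∃ d', d = d' + 1 := ⟨d - 1, by omega⟩
      show (if ε then [(discTree (d'+1)).children.length] else [0]) = _
      rw [show discTree (d'+1) = Tree.node [discTree d'] from rfl, Tree.children_node]
      cases ε <;> simp
  | succ m ih =>
      intro d hd
      obtain ⟨d', rfl⟩ : ∃ d', d = d' + 1 := ⟨d - 1, by omega⟩
      have hq : List.replicate (m+1) 0 ++ [0] = 0 :: (List.replicate m 0 ++ [0]) := by
        simp [List.replicate_succ]
      rw [hq]
      cases hrep : List.replicate m 0 ++ [0] with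
      | nil => simp at hrep
      | cons b r =>
          show 0 :: inclP ε m ((discTree (d'+1)).children.getD 0 (.node [])) (b :: r) = _
          rw [show (discTree (d'+1)).children.getD 0 (.node []) = discTree d' from rfl]
          rw [← hrep, ih d' (by omega)]
          simp [List.replicate_succ]


/-! ### Term calculus lemmas -/

theorem Tm.sub_sub : ∀ (t : Tm) (σ τ : Sub), (t.sub σ).sub τ = t.sub (fun p => (σ p).sub τ)
  | .var p, σ, τ => rfl
  | .coh T A ρ, σ, τ => by
      show Tm.coh T A (fun p => ((ρ p).sub σ).sub τ) = Tm.coh T A (fun p => (ρ p).sub _)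
      exact congrArg _ (funext fun p => Tm.sub_sub (ρ p) σ τ)

theorem Tm.sub_susp : ∀ (t : Tm) (σ : Sub), σ [] = .var [] →
    (t.sub σ).susp = t.susp.sub (suspSub σ)
  | .var p, σ, h => by
      show (σ p).susp = (Tm.var p).susp.sub (suspSub σ)
      simp only [Tm.susp]
      cases p with
      | nil => rw [h]; rfl
      | cons a q => rfl
  | .coh T A ρ, σ, h => by
      show ((Tm.coh T A (fun p => (ρ p).sub σ))).susp = (Tm.coh T A ρ).susp.sub (suspSub σ)
      simp only [Tm.susp, Tm.sub]
      congr 1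
      funext p
      match p with
      | [] => rfl
      | [0] => rfl
      | [j+1] => rfl
      | 0 :: a :: q => exact Tm.sub_susp (ρ (a :: q)) σ h
      | (j+1) :: a :: q => rfl

mutual

theorem tmEqv_refl : ∀ (t : Tm), TmEqv t t
  | .var p => .var p
  | .coh T A σ => .coh T A A σ σ (tyEqv_refl A) (fun p _ => tmEqv_refl (σ p))

theorem tyEqv_refl : ∀ (A : Ty), TyEqv A A
  | .star => .star
  | .arr s A t => .arr (tmEqv_refl s) (tyEqv_refl A) (tmEqv_refl t)

end

mutual

theorem tmEqv_trans : ∀ (a : Tm) {b c : Tm}, TmEqv a b → TmEqv b c → TmEqv a c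
  | .var p, b, c, h1, h2 => by
      cases h1
      exact h2
  | .coh T A ρ, b, c, h1, h2 => by
      cases h1 with
      | coh _ _ B _ ρ' hAB hc =>
          cases h2 with
          | coh _ _ C _ ρ'' hBC hc' =>
              exact .coh T A C ρ ρ'' (tyEqv_trans A hAB hBC)
                (fun p hp => tmEqv_trans (ρ p) (hc p hp) (hc' p hp))

theorem tyEqv_trans : ∀ (A : Ty) {B C : Ty}, TyEqv A B → TyEqv B C → TyEqv A C
  | .star, B, C, h1, h2 => by cases h1; exact h2
  | .arr s A t, B, C, h1, h2 => by
      cases h1 with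
      | arr hs hA ht =>
          cases h2 with
          | arr hs' hA' ht' =>
              exact .arr (tmEqv_trans s hs hs') (tyEqv_trans A hA hA') (tmEqv_trans t ht ht')

end

theorem tm_sub_congr : ∀ (a : Tm) {b : Tm} {σ τ : Sub}, TmEqv a b →
    (∀ p, FvTm b p → TmEqv (σ p) (τ p)) → TmEqv (a.sub σ) (b.sub τ)
  | .var p, b, σ, τ, h, hfv => by
      cases h
      exact hfv p (.var p)
  | .coh T A ρ, b, σ, τ, h, hfv => by
      cases h with
      | coh _ _ B _ ρ' hAB hc =>
          exact .coh T A B _ _ hAB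
            (fun p hp => tm_sub_congr (ρ p) (hc p hp) (fun q hq => hfv q (.coh hp hq)))

theorem tm_sub_id_eqv : ∀ (v : Tm) {τ : Sub}, (∀ p, FvTm v p → TmEqv (.var p) (τ p)) →
    TmEqv v (v.sub τ)
  | .var p, τ, h => h p (.var p)
  | .coh T A σ, τ, h =>
      .coh T A A _ _ (tyEqv_refl A)
        (fun p hp => tm_sub_id_eqv (σ p) (fun q hq => h q (.coh hp hq)))

theorem fv_sub : ∀ (v : Tm) {σ : Sub} {q : Path}, FvTm (v.sub σ) q →
    ∃ p, FvTm v p ∧ FvTm (σ p) q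
  | .var p, σ, q, h => ⟨p, .var p, h⟩
  | .coh T A ρ, σ, q, h => by
      cases h with
      | coh hp hf =>
          obtain ⟨r, hr, hrq⟩ := fv_sub (ρ _) hf
          exact ⟨r, .coh hp hr, hrq⟩

theorem fv_unbCoh {T : Tree} {n : ℕ} {q : Path} (h : FvTm (unbiasedCoh T n) q) :
    IsPath T q := by
  unfold unbiasedCoh at h
  cases h with
  | coh hp hf => cases hf; exact hp

mutual

theorem tm_susp_congr : ∀ (a : Tm) {b : Tm}, TmEqv a b → TmEqv a.susp b.susp
  | .var p, b, h => by
      cases h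
      exact .var _
  | .coh T A σ, b, h => by
      cases h with
      | coh _ _ B _ τ hAB hc =>
          simp only [Tm.susp]
          refine .coh _ _ _ _ _ (ty_susp_congr A hAB) ?_
          intro p hp
          have hp' : IsPath (Tree.node [T]) p := hp
          cases hp' with
          | point ts j hj =>
              cases j with
              | zero => exact TmEqv.var [0]
              | succ j => exact TmEqv.var [j+1]
          | deeper ts k q hk hq =>
              have hk0 : k = 0 := by simpa using hk
              subst hk0
              cases q with
              | nil => exact absurd rfl (isPath_ne_nil hq)
              | cons a q' =>
                  exact tm_susp_congr (σ (a :: q')) (hc (a :: q') hq)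

theorem ty_susp_congr : ∀ (A : Ty) {B : Ty}, TyEqv A B → TyEqv A.susp B.susp
  | .star, B, h => by cases h; exact tyEqv_refl _
  | .arr s A t, B, h => by
      cases h with
      | arr hs hA ht =>
          simp only [Ty.susp]
          exact .arr (tm_susp_congr s hs) (ty_susp_congr A hA) (tm_susp_congr t ht)

end


/-! ### More helpers: free variables of suspensions, srcs, application lemmas -/

theorem fv_susp : ∀ (v : Tm) {p : Path}, FvTm v.susp p →
    (∃ j, p = [j]) ∨ (∃ a q, p = 0 :: a :: q)
  | .var r, p, h => by
      have h' : FvTm (.var (0 :: r)) p := by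
        have e : (Tm.var r).susp = .var (0 :: r) := by simp [Tm.susp]
        rwa [e] at h
      cases h'
      cases r with
      | nil => exact Or.inl ⟨0, rfl⟩
      | cons a q => exact Or.inr ⟨a, q, rfl⟩
  | .coh T A σ, p, h => by
      have e : (Tm.coh T A σ).susp = Tm.coh T.susp A.susp (fun r => match r with
          | [j] => Tm.var [j]
          | 0 :: q => (σ q).susp
          | _ => Tm.var r) := by simp [Tm.susp]
      rw [e] at h
      cases h with
      | coh hp' hf =>
          rename_i p₀
          have hp'' : IsPath (Tree.node [T]) p₀ := hp'
          cases hp'' with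
          | point ts j hj =>
              cases j with
              | zero => cases hf; exact Or.inl ⟨0, rfl⟩
              | succ j => cases hf; exact Or.inl ⟨j + 1, rfl⟩
          | deeper ts i q hi hq =>
              have hi0 : i = 0 := by simpa using hi
              subst hi0
              cases q with
              | nil => exact absurd rfl (isPath_ne_nil hq)
              | cons a q' => exact fv_susp (σ (a :: q')) hf

theorem srcs_unbType_len (T : Tree) : ∀ n : ℕ, (unbiasedType T n).srcs.length = n
  | 0 => by simp [unbiasedType, Ty.srcs]
  | n + 1 => by
      simp [unbiasedType, Ty.srcs, srcs_unbType_len T n]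

theorem srcs_unbType_getD (T : Tree) (dflt : Tm × Tm) : ∀ (n j : ℕ), j < n →
    (unbiasedType T n).srcs.getD j dflt =
      ((unbiasedTm (Tree.bdry j T) j).sub (incl false j T),
       (unbiasedTm (Tree.bdry j T) j).sub (incl true j T))
  | 0, j, h => by omega
  | n + 1, j, h => by
      have he : (unbiasedType T (n + 1)).srcs = (unbiasedType T n).srcs ++
          [((unbiasedTm (Tree.bdry n T) n).sub (incl false n T),
            (unbiasedTm (Tree.bdry n T) n).sub (incl true n T))] := by
        simp [unbiasedType, Ty.srcs]
      rw [he]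
      rcases Nat.lt_or_ge j n with hj | hj
      · rw [getD_append_left _ _ _ _ (by rw [srcs_unbType_len]; exact hj)]
        exact srcs_unbType_getD T dflt n j hj
      · have hjn : j = n := by omega
        subst hjn
        rw [getD_append_right _ _ _ _ (by rw [srcs_unbType_len])]
        rw [srcs_unbType_len]
        simp

theorem discSub_app (A : Ty) (u : Tm) (p : Path) :
    discSub A u p = if p.length - 1 < A.srcs.length then
      (if p.getLastD 0 = 0 then (A.srcs.getD (p.length - 1) (u, u)).1
       else (A.srcs.getD (p.length - 1) (u, u)).2) else u := rfl

theorem kappa_single_app (k i : ℕ) (q : List ℕ) (hq : q ≠ []) (S T : Tree) :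
    kappa [k] S T (i :: q) =
      (if i < k then .var (i :: q)
       else if i = k then
         ((discSub (unbiasedType T ((S.children.getD k (.node [])).dim + 1))
           (unbiasedCoh T ((S.children.getD k (.node [])).dim + 1))) (0 :: q)).sub
             (wedgeShift k)
       else .var ((i + T.children.length - 1) :: q)) := by
  match q with
  | a :: q => rfl

theorem kappa_cons_app (k b : ℕ) (P : List ℕ) (S T : Tree) (i : ℕ) (q : List ℕ)
    (hq : q ≠ []) :
    kappa (k :: b :: P) S T (i :: q) =
      (if i = k then
        ((suspSub (kappa (b :: P) (S.children.getD k (.node []))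
          (T.children.headD (.node [])))) (0 :: q)).sub (compSub k)
      else .var (i :: q)) := by
  match q with
  | a :: q => rfl

theorem suspSub_cons (σ : Sub) (a : ℕ) (q : List ℕ) :
    suspSub σ (0 :: a :: q) = (σ (a :: q)).susp := rfl

theorem suspSub_singleton (σ : Sub) (j : ℕ) : suspSub σ [j] = .var [j] := by cases j <;> rfl

theorem compSub_cons (k a : ℕ) (q : List ℕ) : compSub k (0 :: a :: q) = .var (k :: a :: q) := rfl

theorem compSub_singleton (k j : ℕ) : compSub k [j] = .var [j + k] := by cases j <;> rfl

theorem wedgeShift_cons (k j : ℕ) (q : List ℕ) : wedgeShift k (j :: q) = .var ((j + k) :: q) := rfl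

theorem incl_cons (ε : Bool) (n : ℕ) (T : Tree) (i : ℕ) (q : List ℕ) (hq : q ≠ []) :
    incl ε (n + 1) T (i :: q) = .var (i :: inclP ε n (T.children.getD i (.node [])) q) := by
  match q with
  | a :: q =>
      rw [incl_eq_var ε (n+1) T (i :: a :: q) (by simp)]
      rfl

section InsChildren

variable {α : Type _}

theorem ins_children_getD_lt {k i : ℕ} (ts mid : List α) (hk : k ≤ ts.length) (h : i < k)
    (dflt : α) : (ts.take k ++ mid ++ ts.drop (k + 1)).getD i dflt = ts.getD i dflt := by
  rw [getD_append_left _ _ _ _ (by simp; omega), getD_append_left _ _ _ _ (by simp; omega),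
    getD_take _ _ _ _ h]

theorem ins_children_getD_mid {k j : ℕ} (ts mid : List α) (hk : k ≤ ts.length)
    (h : j < mid.length) (dflt : α) :
    (ts.take k ++ mid ++ ts.drop (k + 1)).getD (k + j) dflt = mid.getD j dflt := by
  have hlen : (ts.take k).length = k := by simp; omega
  rw [getD_append_left _ _ _ _ (by simp; omega), getD_append_right _ _ _ _ (by omega),
    hlen]
  congr 1
  omega

theorem ins_children_getD_gt {k i : ℕ} (ts mid : List α) (hk : k ≤ ts.length) (h : k < i)
    (dflt : α) :
    (ts.take k ++ mid ++ ts.drop (k + 1)).getD (i + mid.length - 1) dflt = ts.getD i dflt := by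
  have hlen : (ts.take k ++ mid).length = k + mid.length := by simp; omega
  rw [getD_append_right _ _ _ _ (by rw [hlen]; omega), getD_drop, hlen]
  congr 1
  omega

end InsChildren

theorem unbTm_eq_unbCoh {T : Tree} {n : ℕ} (h : T ≠ discTree n) :
    unbiasedTm T n = unbiasedCoh T n := by
  rw [unbiasedTm, if_neg h]
  rfl


/-! ### Final-step helpers for the main induction -/

theorem lh_single' (k : ℕ) (ts : List Tree) :
    lh [k] (Tree.node ts) = ((ts.getD k (.node [])).maxPath).length := by
  show (k :: (ts.getD k (.node [])).maxPath).length - 1 = _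
  simp

theorem var_susp (p : Path) : (Tm.var p).susp = .var (0 :: p) := by simp [Tm.susp]

/-- Case B (`d ≤ m`) final step for a single-index branch. -/
theorem caseB_final (ε : Bool) (k m dd : ℕ) (ts Tc : List Tree) (hk : k ≤ ts.length)
    (hdim : (Tree.node Tc).dim ≤ m + 1) :
    TmEqv ((unbiasedCoh (Tree.node Tc) dd).sub (wedgeShift k))
      (((unbiasedCoh (Tree.node Tc) dd).sub (wedgeShift k)).sub
        (incl ε (m + 1) (insTree [k] (Tree.node ts) (Tree.node Tc)))) := by
  apply tm_sub_id_eqv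
  intro p hfp
  obtain ⟨p₀, hf₀, hfw⟩ := fv_sub _ hfp
  have hp₀ : IsPath (Tree.node Tc) p₀ := fv_unbCoh hf₀
  cases hp₀ with
  | point ts' j hj =>
      rw [wedgeShift_cons] at hfw
      cases hfw
      rw [incl_singleton]
      exact .var _
  | deeper ts' j p₁ hj hp₁ =>
      rw [wedgeShift_cons] at hfw
      cases hfw
      have hp₁ne := isPath_ne_nil hp₁
      rw [incl_cons ε m _ _ _ hp₁ne]
      rw [show (insTree [k] (Tree.node ts) (Tree.node Tc)).children
        = ts.take k ++ Tc ++ ts.drop (k+1) from rfl]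
      rw [show j + k = k + j by omega]
      rw [ins_children_getD_mid ts Tc hk hj]
      rw [inclP_fix ε m _ _ hp₁ (by have := Tree.dim_getD_lt hj; omega)]
      exact .var _

/-- Case A (`m < d`) final step for a single-index branch. -/
theorem caseA_final (ε : Bool) (k m : ℕ) (ts Tc : List Tree) (hk : k ≤ ts.length) :
    TmEqv (((unbiasedCoh (Tree.bdry (m+1) (Tree.node Tc)) (m+1)).sub
        (incl ε (m+1) (Tree.node Tc))).sub (wedgeShift k))
      (((unbiasedCoh (Tree.bdry (m+1) (Tree.node Tc)) (m+1)).sub (wedgeShift k)).sub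
        (incl ε (m+1) (insTree [k] (Tree.node ts) (Tree.node Tc)))) := by
  rw [Tm.sub_sub, Tm.sub_sub]
  refine tm_sub_congr _ (tmEqv_refl _) ?_
  intro p hfp
  have hp : IsPath (Tree.bdry (m+1) (Tree.node Tc)) p := fv_unbCoh hfp
  rw [Tree.bdry_node] at hp
  cases hp with
  | point ts' j hj =>
      show TmEqv ((incl ε (m+1) (Tree.node Tc) [j]).sub (wedgeShift k))
        ((wedgeShift k [j]).sub (incl ε (m+1) (insTree [k] (Tree.node ts) (Tree.node Tc))))
      rw [incl_singleton]
      rw [show wedgeShift k [j] = Tm.var [j + k] from wedgeShift_cons k j []]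
      show TmEqv (wedgeShift k [j]) _
      rw [show wedgeShift k [j] = Tm.var [j + k] from wedgeShift_cons k j []]
      rw [show (Tm.var [j + k]).sub (incl ε (m+1) (insTree [k] (Tree.node ts) (Tree.node Tc)))
        = incl ε (m+1) (insTree [k] (Tree.node ts) (Tree.node Tc)) [j + k] from rfl]
      rw [incl_singleton]
      exact .var _
  | deeper ts' j p₁ hj hp₁ =>
      rw [List.length_map] at hj
      have hp₁ne : p₁ ≠ [] := isPath_ne_nil hp₁
      show TmEqv ((incl ε (m+1) (Tree.node Tc) (j :: p₁)).sub (wedgeShift k))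
        ((wedgeShift k (j :: p₁)).sub (incl ε (m+1) (insTree [k] (Tree.node ts) (Tree.node Tc))))
      rw [incl_cons ε m _ _ _ hp₁ne, Tree.children_node, wedgeShift_cons]
      rw [show (Tm.var (j :: inclP ε m (Tc.getD j (.node [])) p₁)).sub (wedgeShift k)
        = wedgeShift k (j :: inclP ε m (Tc.getD j (.node [])) p₁) from rfl]
      rw [wedgeShift_cons]
      rw [show (Tm.var ((j + k) :: p₁)).sub (incl ε (m+1) (insTree [k] (Tree.node ts) (Tree.node Tc)))
        = incl ε (m+1) (insTree [k] (Tree.node ts) (Tree.node Tc)) ((j + k) :: p₁) from rfl]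
      rw [incl_cons ε m _ _ _ hp₁ne]
      rw [show (insTree [k] (Tree.node ts) (Tree.node Tc)).children
        = ts.take k ++ Tc ++ ts.drop (k+1) from rfl]
      rw [show j + k = k + j by omega]
      rw [ins_children_getD_mid ts Tc hk hj]
      exact .var _

/-- Final step for the recursive (cons) branch at the branching index. -/
theorem caseC_final (ε : Bool) (k m₀ : ℕ) (ts : List Tree) (t' : Tree) (b : ℕ) (P' : List ℕ)
    (hk : k ≤ ts.length) (u v : Tm)
    (h1 : TmEqv u (v.sub (incl ε (m₀+1) (insTree (b :: P') (ts.getD k (.node [])) t')))) :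
    TmEqv ((u.susp).sub (compSub k))
      (((v.susp).sub (compSub k)).sub
        (incl ε (m₀+2) (insTree (k :: b :: P') (Tree.node ts) (Tree.node [t'])))) := by
  set ins' := insTree (b :: P') (ts.getD k (.node [])) t' with hins'
  set insS := insTree (k :: b :: P') (Tree.node ts) (Tree.node [t']) with hinsS
  have h2 : TmEqv u.susp ((v.sub (incl ε (m₀+1) ins')).susp) := tm_susp_congr _ h1
  rw [Tm.sub_susp v _ (incl_nil ε m₀ ins')] at h2
  have h4 : TmEqv (u.susp.sub (compSub k))
      (((v.susp).sub (suspSub (incl ε (m₀+1) ins'))).sub (compSub k)) :=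
    tm_sub_congr _ h2 (fun p _ => tmEqv_refl _)
  rw [Tm.sub_sub] at h4
  rw [Tm.sub_sub]
  refine tmEqv_trans _ h4 (tm_sub_congr _ (tmEqv_refl _) ?_)
  intro p hfp
  rcases fv_susp v hfp with ⟨j, rfl⟩ | ⟨a₁, q₁, rfl⟩
  · show TmEqv ((suspSub (incl ε (m₀+1) ins') [j]).sub (compSub k))
      ((compSub k [j]).sub (incl ε (m₀+2) insS))
    rw [suspSub_singleton, compSub_singleton]
    rw [show (Tm.var [j]).sub (compSub k) = compSub k [j] from rfl, compSub_singleton]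
    rw [show (Tm.var [j + k]).sub (incl ε (m₀+2) insS) = incl ε (m₀+2) insS [j + k] from rfl]
    rw [incl_singleton]
    exact .var _
  · show TmEqv ((suspSub (incl ε (m₀+1) ins') (0 :: a₁ :: q₁)).sub (compSub k))
      ((compSub k (0 :: a₁ :: q₁)).sub (incl ε (m₀+2) insS))
    rw [suspSub_cons, incl_eq_var ε (m₀+1) ins' (a₁ :: q₁) (by simp)]
    cases hρ : inclP ε (m₀+1) ins' (a₁ :: q₁) with
    | nil => exact absurd hρ (inclP_ne_nil _ _ _ _ (by simp))
    | cons c₁ ρ' =>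
        rw [var_susp]
        rw [show (Tm.var (0 :: c₁ :: ρ')).sub (compSub k) = compSub k (0 :: c₁ :: ρ') from rfl]
        rw [compSub_cons, compSub_cons]
        rw [show (Tm.var (k :: a₁ :: q₁)).sub (incl ε (m₀+2) insS)
          = incl ε (m₀+2) insS (k :: a₁ :: q₁) from rfl]
        rw [incl_cons ε (m₀+1) insS k (a₁ :: q₁) (by simp)]
        have hmid : insS.children.getD k (.node []) = ins' := by
          rw [hinsS, show (insTree (k :: b :: P') (Tree.node ts) (Tree.node [t'])).children
            = ts.take k ++ [ins'] ++ ts.drop (k+1) from rfl]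
          have := ins_children_getD_mid (k := k) (j := 0) ts [ins'] hk (by simp) (Tree.node [])
          simpa using this
        rw [hmid, hρ]
        exact .var _


theorem insertion_bdry_aux (S : Tree) (P : List ℕ) (hbr : IsBranch S P) :
    ∀ (n : ℕ) (T : Tree), bh P ≤ T.th → T.dim ≤ lh P S →
      ((T.th < n ∧ n ≤ lh P S) ∨ lh P S ≤ n) →
      insTree P (Tree.bdry n S) (Tree.bdry n T) = Tree.bdry n (insTree P S T) ∧
      (∀ ε : Bool,
        MaxEqv (Tree.bdry n S)
          (Sub.comp (incl ε n S) (kappa P S T))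
          (Sub.comp (kappa P (Tree.bdry n S) (Tree.bdry n T))
            (incl ε n (insTree P S T)))) := by
  induction hbr with
  | here ts k hk hlin =>
      intro n T hth hdim hn
      have hlh1 : 1 ≤ lh [k] (Tree.node ts) := two_le_branchVar_len (.here ts k hk hlin)
      obtain ⟨m, rfl⟩ : ∃ m, n = m + 1 := by
        cases n with
        | zero => exact absurd hn (by rintro (⟨h1, h2⟩ | h) <;> omega)
        | succ m => exact ⟨m, rfl⟩
      obtain ⟨Tc⟩ := T
      obtain ⟨d, hdisc⟩ : ∃ d, ts.getD k (.node []) = discTree d :=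
        ⟨_, Tree.linear_eq_disc _ _ rfl hlin⟩
      have hdimtk : (ts.getD k (.node [])).dim = d := by rw [hdisc, Tree.dim_disc]
      have hlhval : lh [k] (Tree.node ts) = d + 1 := by
        rw [lh_single', hdisc, maxPath_disc]
        simp
      rw [hlhval] at hdim hn
      refine ⟨?_, ?_⟩
      · show insTree [k] (Tree.bdry (m+1) (Tree.node ts)) (Tree.bdry (m+1) (Tree.node Tc)) = _
        rw [Tree.bdry_node, Tree.bdry_node]
        rw [show insTree [k] (Tree.node (ts.map (Tree.bdry m))) (Tree.node (Tc.map (Tree.bdry m)))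
          = Tree.node ((ts.map (Tree.bdry m)).take k ++ Tc.map (Tree.bdry m)
            ++ (ts.map (Tree.bdry m)).drop (k+1)) from rfl]
        rw [show insTree [k] (Tree.node ts) (Tree.node Tc)
          = Tree.node (ts.take k ++ Tc ++ ts.drop (k+1)) from rfl, Tree.bdry_node]
        simp [List.map_take, List.map_drop]
      · intro ε p hp
        rw [Tree.bdry_node] at hp
        have hmapne : ts.map (Tree.bdry m) ≠ [] := by
          intro hc
          rw [List.map_eq_nil_iff] at hc
          subst hc
          simp at hk
        obtain ⟨i, q0, rfl, hi, hq⟩ := isMaxPath_node_inv hmapne hp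
        rw [List.length_map] at hi
        rw [getD_map _ _ _ _ (Tree.node []) hi] at hq
        have hqne : q0 ≠ [] := isMaxPath_ne_nil hq
        show TmEqv
          ((incl ε (m+1) (Tree.node ts) (i :: q0)).sub (kappa [k] (Tree.node ts) (Tree.node Tc)))
          ((kappa [k] (Tree.bdry (m+1) (Tree.node ts)) (Tree.bdry (m+1) (Tree.node Tc))
            (i :: q0)).sub (incl ε (m+1) (insTree [k] (Tree.node ts) (Tree.node Tc))))
        rw [incl_cons ε m (Tree.node ts) i q0 hqne, Tree.children_node]
        rw [show (Tm.var (i :: inclP ε m (ts.getD i (Tree.node [])) q0)).sub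
            (kappa [k] (Tree.node ts) (Tree.node Tc))
          = kappa [k] (Tree.node ts) (Tree.node Tc) (i :: inclP ε m (ts.getD i (Tree.node [])) q0)
          from rfl]
        rw [kappa_single_app k i _ (inclP_ne_nil ε m _ _ hqne) (Tree.node ts) (Tree.node Tc)]
        rw [kappa_single_app k i q0 hqne (Tree.bdry (m+1) (Tree.node ts))
          (Tree.bdry (m+1) (Tree.node Tc))]
        have hchildB : (Tree.bdry (m+1) (Tree.node ts)).children.getD k (.node [])
            = discTree (min m d) := by
          rw [Tree.bdry_node, Tree.children_node, getD_map _ _ _ _ (Tree.node []) hk, hdisc,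
            Tree.bdry_disc]
        have hlenB : (Tree.bdry (m+1) (Tree.node Tc)).children.length = Tc.length := by
          rw [Tree.bdry_node, Tree.children_node, List.length_map]
        rw [hchildB, hlenB, Tree.dim_disc]
        simp only [Tree.children_node]
        rw [hdimtk]
        rcases Nat.lt_trichotomy i k with hik | hik | hik
        · rw [if_pos hik, if_pos hik]
          rw [show (Tm.var (i :: q0)).sub (incl ε (m+1) (insTree [k] (Tree.node ts) (Tree.node Tc)))
            = incl ε (m+1) (insTree [k] (Tree.node ts) (Tree.node Tc)) (i :: q0) from rfl]
          rw [incl_cons ε m _ i q0 hqne]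
          rw [show (insTree [k] (Tree.node ts) (Tree.node Tc)).children
            = ts.take k ++ Tc ++ ts.drop (k+1) from rfl]
          rw [ins_children_getD_lt ts Tc (le_of_lt hk) hik]
          exact .var _
        · subst hik
          rw [if_neg (lt_irrefl i), if_neg (lt_irrefl i), if_pos rfl, if_pos rfl]
          by_cases hdm : d ≤ m
          · -- case B : d ≤ m
            rw [min_eq_right hdm]
            have hq0eq : q0 = List.replicate d 0 ++ [0] := by
              have h := isMaxPath_disc (min m d) q0 (by rwa [hdisc, Tree.bdry_disc] at hq)
              rwa [min_eq_right hdm] at h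
            have hTfix : Tree.bdry (m+1) (Tree.node Tc) = Tree.node Tc :=
              Tree.bdry_eq_self _ _ (by omega)
            have hr : inclP ε m (ts.getD i (.node [])) q0 = q0 := by
              rw [hdisc, hq0eq, ← maxPath_disc]
              exact inclP_fix ε m _ _ (isPath_maxPath_disc d) (by rw [Tree.dim_disc]; omega)
            rw [hr, hTfix]
            rw [discSub_app]
            rw [srcs_unbType_len]
            have hq0len : q0.length = d + 1 := by rw [hq0eq]; simp
            have hidx : (0 :: q0).length - 1 = d + 1 := by simp [hq0len]
            rw [hidx]
            rw [if_neg (show ¬ (d + 1 < d + 1) by omega)]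
            exact caseB_final ε i m (d+1) ts Tc (le_of_lt hk) (by omega)
          · -- case A : m < d
            have hmd : m < d := by omega
            rw [min_eq_left (by omega : m ≤ d)]
            have hTth : (Tree.node Tc).th ≤ m := by
              rcases hn with ⟨h1, h2⟩ | h2 <;> omega
            have hq0eq : q0 = List.replicate m 0 ++ [0] := by
              have h := isMaxPath_disc (min m d) q0 (by rwa [hdisc, Tree.bdry_disc] at hq)
              rwa [min_eq_left (by omega)] at h
            have hq0len : q0.length = m + 1 := by rw [hq0eq]; simp
            have hr : inclP ε m (ts.getD i (.node [])) q0
                = List.replicate m 0 ++ [if ε then 1 else 0] := by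
              rw [hdisc, hq0eq]
              exact inclP_disc_lt ε m d hmd
            rw [hr]
            rw [discSub_app]
            rw [discSub_app]
            rw [srcs_unbType_len]
            rw [srcs_unbType_len]
            have hidx1 : (0 :: (List.replicate m 0 ++ [if ε then 1 else 0])).length - 1 = m + 1 := by
              simp
            have hidx2 : (0 :: q0).length - 1 = m + 1 := by simp [hq0len]
            rw [hidx1]
            rw [hidx2]
            rw [if_pos (show m + 1 < d + 1 by omega)]
            rw [if_neg (show ¬ (m + 1 < m + 1) by omega)]
            have hlast : (0 :: (List.replicate m 0 ++ [if ε then 1 else 0])).getLastD 0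
                = if ε then 1 else 0 := by
              rw [← List.cons_append]
              exact List.getLastD_concat
            rw [hlast, srcs_unbType_getD _ _ (d+1) (m+1) (by omega)]
            have hTne : Tree.bdry (m+1) (Tree.node Tc) ≠ discTree (m+1) := by
              intro hcon
              have h1 := Tree.th_bdry_le (m+1) (Tree.node Tc)
              rw [hcon, Tree.th_disc] at h1
              omega
            rw [unbTm_eq_unbCoh hTne]
            cases ε
            · rw [if_pos (show (if (false : Bool) = true then 1 else 0) = 0 from rfl)]
              exact caseA_final false i m ts Tc (le_of_lt hk)
            · rw [if_neg (show ¬ ((if (true : Bool) = true then 1 else 0) = 0) by decide)]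
              exact caseA_final true i m ts Tc (le_of_lt hk)
        · rw [if_neg (by omega), if_neg (by omega), if_neg (by omega), if_neg (by omega)]
          rw [show (Tm.var ((i + Tc.length - 1) :: q0)).sub
              (incl ε (m+1) (insTree [k] (Tree.node ts) (Tree.node Tc)))
            = incl ε (m+1) (insTree [k] (Tree.node ts) (Tree.node Tc)) ((i + Tc.length - 1) :: q0)
            from rfl]
          rw [incl_cons ε m _ _ q0 hqne]
          rw [show (insTree [k] (Tree.node ts) (Tree.node Tc)).children
            = ts.take k ++ Tc ++ ts.drop (k+1) from rfl]
          rw [ins_children_getD_gt ts Tc (le_of_lt hk) hik]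
          exact .var _
  | there ts k P hk hPne hbr' ih =>
      intro n T hth hdim hn
      obtain ⟨b, P', rfl⟩ : ∃ b P', P = b :: P' := by
        cases P with
        | nil => exact absurd rfl hPne
        | cons b P' => exact ⟨b, P', rfl⟩
      have hbh : bh (k :: b :: P') = (b :: P').length := by simp [bh]
      rw [hbh] at hth
      have hlen1 : 1 ≤ (b :: P').length := by simp
      obtain ⟨t', rfl⟩ := th_one_node_single (T := T) (by omega)
      have hthT : (Tree.node [t']).th = t'.th + 1 := Tree.th_node_single t'
      have hdimT : (Tree.node [t']).dim = t'.dim + 1 := by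
        rw [Tree.dim_node_cons, Tree.dim_node_nil]
        omega
      have hlhval : lh (k :: b :: P') (Tree.node ts)
          = lh (b :: P') (ts.getD k (.node [])) + 1 := lh_cons (by simp) (Tree.node ts)
      have hlhP1 : 1 ≤ lh (b :: P') (ts.getD k (.node [])) := two_le_branchVar_len hbr'
      rw [hlhval] at hdim hn
      rw [hthT] at hth hn
      rw [hdimT] at hdim
      obtain ⟨m₀, rfl⟩ : ∃ m₀, n = m₀ + 2 := by
        rcases hn with ⟨h1, h2⟩ | h2
        · exact ⟨n - 2, by omega⟩
        · exact ⟨n - 2, by omega⟩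
      have hth2 : P'.length + 1 ≤ t'.th + 1 := by simpa using hth
      obtain ⟨ihtree, ihsub⟩ := ih (m₀ + 1) t'
        (by simp only [bh, List.length_cons]; omega) (by omega)
        (by rcases hn with ⟨h1, h2⟩ | h2
            · exact Or.inl ⟨by omega, by omega⟩
            · exact Or.inr (by omega))
      refine ⟨?_, ?_⟩
      · show insTree (k :: b :: P') (Tree.bdry (m₀+2) (Tree.node ts))
          (Tree.bdry (m₀+2) (Tree.node [t'])) = _
        rw [Tree.bdry_node, Tree.bdry_node]
        rw [show insTree (k :: b :: P') (Tree.node (ts.map (Tree.bdry (m₀+1))))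
            (Tree.node ([t'].map (Tree.bdry (m₀+1))))
          = Tree.node ((ts.map (Tree.bdry (m₀+1))).take k
            ++ [insTree (b :: P') ((ts.map (Tree.bdry (m₀+1))).getD k (.node []))
                (Tree.bdry (m₀+1) t')]
            ++ (ts.map (Tree.bdry (m₀+1))).drop (k+1)) from rfl]
        rw [getD_map _ _ _ _ (Tree.node []) hk]
        rw [ihtree]
        rw [show insTree (k :: b :: P') (Tree.node ts) (Tree.node [t'])
          = Tree.node (ts.take k
            ++ [insTree (b :: P') (ts.getD k (.node [])) t']
            ++ ts.drop (k+1)) from rfl]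
        rw [Tree.bdry_node]
        simp [List.map_take, List.map_drop]
      · intro ε p hp
        rw [Tree.bdry_node] at hp
        have hmapne : ts.map (Tree.bdry (m₀+1)) ≠ [] := by
          intro hc
          rw [List.map_eq_nil_iff] at hc
          subst hc
          simp at hk
        obtain ⟨i, q0, rfl, hi, hq⟩ := isMaxPath_node_inv hmapne hp
        rw [List.length_map] at hi
        rw [getD_map _ _ _ _ (Tree.node []) hi] at hq
        have hqne : q0 ≠ [] := isMaxPath_ne_nil hq
        show TmEqv
          ((incl ε (m₀+2) (Tree.node ts) (i :: q0)).sub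
            (kappa (k :: b :: P') (Tree.node ts) (Tree.node [t'])))
          ((kappa (k :: b :: P') (Tree.bdry (m₀+2) (Tree.node ts))
            (Tree.bdry (m₀+2) (Tree.node [t'])) (i :: q0)).sub
            (incl ε (m₀+2) (insTree (k :: b :: P') (Tree.node ts) (Tree.node [t']))))
        rw [incl_cons ε (m₀+1) (Tree.node ts) i q0 hqne, Tree.children_node]
        rw [show (Tm.var (i :: inclP ε (m₀+1) (ts.getD i (Tree.node [])) q0)).sub
            (kappa (k :: b :: P') (Tree.node ts) (Tree.node [t']))
          = kappa (k :: b :: P') (Tree.node ts) (Tree.node [t'])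
            (i :: inclP ε (m₀+1) (ts.getD i (Tree.node [])) q0) from rfl]
        rw [kappa_cons_app k b P' (Tree.node ts) (Tree.node [t']) i _
          (inclP_ne_nil ε (m₀+1) _ _ hqne)]
        rw [kappa_cons_app k b P' (Tree.bdry (m₀+2) (Tree.node ts))
          (Tree.bdry (m₀+2) (Tree.node [t'])) i q0 hqne]
        by_cases hik : i = k
        · subst hik
          rw [if_pos rfl, if_pos rfl]
          have hc1 : (Tree.node ts).children.getD i (.node []) = ts.getD i (.node []) := rfl
          have hc2 : (Tree.node [t']).children.headD (.node []) = t' := rfl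
          have hc3 : (Tree.bdry (m₀+2) (Tree.node ts)).children.getD i (.node [])
              = Tree.bdry (m₀+1) (ts.getD i (.node [])) := by
            rw [Tree.bdry_node, Tree.children_node, getD_map _ _ _ _ (Tree.node []) hi]
          have hc4 : (Tree.bdry (m₀+2) (Tree.node [t'])).children.headD (.node [])
              = Tree.bdry (m₀+1) t' := by
            rw [Tree.bdry_node]
            rfl
          rw [hc1, hc2, hc3, hc4]
          obtain ⟨a, q1, rfl⟩ : ∃ a q1, q0 = a :: q1 := by
            cases q0 with
            | nil => exact absurd rfl hqne
            | cons a q1 => exact ⟨a, q1, rfl⟩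
          cases hr : inclP ε (m₀+1) (ts.getD i (Tree.node [])) (a :: q1) with
          | nil => exact absurd hr (inclP_ne_nil _ _ _ _ hqne)
          | cons c r' =>
              rw [suspSub_cons, suspSub_cons]
              have h1 := ihsub ε (a :: q1) hq
              rw [show Sub.comp (incl ε (m₀+1) (ts.getD i (Tree.node [])))
                  (kappa (b :: P') (ts.getD i (Tree.node [])) t') (a :: q1)
                = (incl ε (m₀+1) (ts.getD i (Tree.node [])) (a :: q1)).sub
                  (kappa (b :: P') (ts.getD i (Tree.node [])) t') from rfl] at h1
              rw [incl_eq_var ε (m₀+1) _ _ (by simp), hr] at h1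
              exact caseC_final ε i m₀ ts t' b P' (le_of_lt hi)
                (kappa (b :: P') (ts.getD i (Tree.node [])) t' (c :: r'))
                (kappa (b :: P') (Tree.bdry (m₀+1) (ts.getD i (Tree.node [])))
                  (Tree.bdry (m₀+1) t') (a :: q1)) h1
        · rw [if_neg hik, if_neg hik]
          rw [show (Tm.var (i :: q0)).sub
              (incl ε (m₀+2) (insTree (k :: b :: P') (Tree.node ts) (Tree.node [t'])))
            = incl ε (m₀+2) (insTree (k :: b :: P') (Tree.node ts) (Tree.node [t'])) (i :: q0)
            from rfl]
          rw [incl_cons ε (m₀+1) _ i q0 hqne]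
          rw [show (insTree (k :: b :: P') (Tree.node ts) (Tree.node [t'])).children
            = ts.take k ++ [insTree (b :: P') (ts.getD k (.node [])) t'] ++ ts.drop (k+1)
            from rfl]
          rcases Nat.lt_or_ge i k with hlt | hge
          · rw [ins_children_getD_lt ts _ (le_of_lt hk) hlt]
            exact .var _
          · have hgt : k < i := by omega
            have h2 := ins_children_getD_gt (k := k) (i := i) ts
              [insTree (b :: P') (ts.getD k (.node [])) t'] (le_of_lt hk) hgt (Tree.node [])
            have h3 : (ts.take k ++ [insTree (b :: P') (ts.getD k (.node [])) t']
                ++ ts.drop (k+1)).getD i (.node []) = ts.getD i (.node []) := by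
              simpa using h2
            rw [h3]
            exact .var _


/-- Under the stated conditions, the `n`-boundary commutes
with insertion: `∂ₙ(S)≪∂ₙ(P), ∂ₙ(T)≫ = ∂ₙ(S≪P,T≫)`, and for each `ε`,
`δₙᵉ(S) ∘ κ_{S,P,T} ≡ᵐᵃˣ κ_{∂ₙS,∂ₙP,∂ₙT} ∘ δₙᵉ(S≪P,T≫)`. -/
theorem insertion_bdry (n : ℕ) (S T : Tree) (P : List ℕ)
    (hbr : IsBranch S P) (hth : bh P ≤ T.th) (hdim : T.dim ≤ lh P S)
    (hn : (T.th < n ∧ n ≤ lh P S) ∨ lh P S ≤ n) :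
    insTree P (Tree.bdry n S) (Tree.bdry n T) = Tree.bdry n (insTree P S T) ∧
    (∀ ε : Bool,
      MaxEqv (Tree.bdry n S)
        (Sub.comp (incl ε n S) (kappa P S T))
        (Sub.comp (kappa P (Tree.bdry n S) (Tree.bdry n T))
          (incl ε n (insTree P S T)))) := by
  exact insertion_bdry_aux S P hbr n T hth hdim hn

end Catt
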